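/- Let K be a field and let G₁, G₂ ∈ K with G₁ ≠ 0, G₂ ≠ 0, and G₁·G₂ ≠ 1. Define f(a, b) = (a/(1 − a·b), b/(1 − a·b)) for a, b ∈ K with a·b ≠ 1. Then the pair (−1/G₂, −1/G₁) satisfies (−1/G₂)·(−1/G₁) ≠ 1 and f(−1/G₂, −1/G₁) = f(G₁, G₂); moreover, if in addition G₁·G₂ ≠ −1, then (−1/G₂, −1/G₁) ≠ (G₁, G₂), so f is not injective and the pair (G₁, G₂) cannot be uniquely recovered from the closed-loop transfer functions (G₁/(1 − G₁G₂), G₂/(1 − G₁G₂)). -/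

import Mathlib

/-- Two-node feedback loop: the pair `(-1/G₂, -1/G₁)` yields the same
closed-loop transfer functions `(a/(1 - a·b), b/(1 - a·b))` as `(G₁, G₂)`,
and differs from `(G₁, G₂)` when `G₁·G₂ ≠ -1`; hence the open-loop transfer
functions are not globally identifiable from the closed-loop ones. -/
theorem two_node_loop_not_globally_identifiable
    {K : Type*} [Field K] (G₁ G₂ : K)
    (hG₁ : G₁ ≠ 0) (hG₂ : G₂ ≠ 0) (h : G₁ * G₂ ≠ 1) :
    (-1 / G₂) * (-1 / G₁) ≠ 1 ∧
    (-1 / G₂) / (1 - (-1 / G₂) * (-1 / G₁)) = G₁ / (1 - G₁ * G₂) ∧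
    (-1 / G₁) / (1 - (-1 / G₂) * (-1 / G₁)) = G₂ / (1 - G₁ * G₂) ∧
    (G₁ * G₂ ≠ -1 → (-1 / G₂, -1 / G₁) ≠ (G₁, G₂)) := by
  have h1 : (1 : K) - G₁ * G₂ ≠ 0 := sub_ne_zero.mpr (Ne.symm h)
  have key : 1 - (-1 / G₂) * (-1 / G₁) = (G₁ * G₂ - 1) / (G₁ * G₂) := by
    field_simp
  have hne0 : (G₁ * G₂ - 1) / (G₁ * G₂) ≠ 0 := by
    apply div_ne_zero (sub_ne_zero.mpr h) (mul_ne_zero hG₁ hG₂)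
  refine ⟨?_, ?_, ?_, ?_⟩
  · intro hc
    apply h
    field_simp at hc
    rw [mul_comm] at hc
    exact hc.symm
  · rw [key, div_eq_div_iff hne0 h1, div_mul_eq_mul_div]
    field_simp
    ring
  · rw [key, div_eq_div_iff hne0 h1, div_mul_eq_mul_div]
    field_simp
    ring
  · intro hne hc
    apply hne
    have h2 := congrArg Prod.fst hc
    simp only [Prod.fst] at h2
    field_simp at h2
    rw [mul_comm]
    exact h2.symm
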